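/- The complete graph K_n is ℤ₃-connected if and only if n = 1 or n ≥ 5. -/

import Mathlib

/-- A finite loopless multigraph: each edge has an ordered pair of distinct endpoints
(the ordering is immaterial; it is only used to describe orientations). -/
structure Multigraph : Type 1 where
  V : Type
  fintypeV : Fintype V
  decEqV : DecidableEq V
  E : Type
  fintypeE : Fintype E
  decEqE : DecidableEq E
  ends : E → V × V
  loopless : ∀ e, (ends e).1 ≠ (ends e).2

attribute [instance] Multigraph.fintypeV Multigraph.decEqV Multigraph.fintypeE Multigraph.decEqE

namespace Multigraph

variable (G : Multigraph)

/-- Tail of an edge under an orientation `D` (`true` = directed from first to second end). -/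
def tail (D : G.E → Bool) (e : G.E) : G.V := if D e then (G.ends e).1 else (G.ends e).2

/-- Head of an edge under an orientation `D`. -/
def head (D : G.E → Bool) (e : G.E) : G.V := if D e then (G.ends e).2 else (G.ends e).1

/-- Out-degree of `v` under orientation `D`. -/
def outDeg (D : G.E → Bool) (v : G.V) : ℕ := (Finset.univ.filter fun e => G.tail D e = v).card

/-- In-degree of `v` under orientation `D`. -/
def inDeg (D : G.E → Bool) (v : G.V) : ℕ := (Finset.univ.filter fun e => G.head D e = v).card

/-- A modulo 3-orientation. -/
def HasMod3Orientation : Prop :=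
  ∃ D : G.E → Bool, ∀ v : G.V, ((G.outDeg D v : ZMod 3) = (G.inDeg D v : ZMod 3))

/-- A nowhere-zero 3-flow. -/
def HasNowhereZero3Flow : Prop :=
  ∃ (D : G.E → Bool) (f : G.E → ℤ),
    (∀ e, 1 ≤ |f e| ∧ |f e| ≤ 2) ∧
    (∀ v : G.V,
      (∑ e : G.E, if G.tail D e = v then f e else 0) =
      (∑ e : G.E, if G.head D e = v then f e else 0))

/-- `ℤ₃`-connectivity. -/
def Z3Connected : Prop :=
  ∀ b : G.V → ZMod 3, (∑ v : G.V, b v) = 0 →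
    ∃ D : G.E → Bool, ∀ v : G.V, (G.outDeg D v : ZMod 3) - (G.inDeg D v : ZMod 3) = b v

/-- Degree of a vertex. -/
def degree (v : G.V) : ℕ :=
  (Finset.univ.filter fun e => (G.ends e).1 = v ∨ (G.ends e).2 = v).card

/-- Minimum degree `δ(G)`. -/
noncomputable def minDegree : ℕ := sInf (Set.range G.degree)

/-- The edge cut `∂_G(S)`. -/
def cut (S : Finset G.V) : Finset G.E :=
  Finset.univ.filter fun e =>
    ((G.ends e).1 ∈ S ∧ (G.ends e).2 ∉ S) ∨ ((G.ends e).2 ∈ S ∧ (G.ends e).1 ∉ S)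

def Adjacent (u v : G.V) : Prop :=
  ∃ e : G.E, G.ends e = (u, v) ∨ G.ends e = (v, u)

def IsIndepSet (S : Finset G.V) : Prop :=
  ∀ u ∈ S, ∀ v ∈ S, u ≠ v → ¬ G.Adjacent u v

/-- The independence number `α(G)`. -/
noncomputable def indepNum : ℕ := sSup {n : ℕ | ∃ S : Finset G.V, G.IsIndepSet S ∧ S.card = n}

def FiveEdgeConnected : Prop :=
  ∀ S : Finset G.V, S.Nonempty → S ≠ Finset.univ → 5 ≤ (G.cut S).card

/-- Every odd edge cut has at least 5 edges. -/
def Odd5EdgeConnected : Prop :=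
  ∀ S : Finset G.V, Odd (G.cut S).card → 5 ≤ (G.cut S).card

/-- `G` contains `K₄` as a subgraph. -/
def ContainsK4 : Prop :=
  ∃ a b c d : G.V, a ≠ b ∧ a ≠ c ∧ a ≠ d ∧ b ≠ c ∧ b ≠ d ∧ c ≠ d ∧
    G.Adjacent a b ∧ G.Adjacent a c ∧ G.Adjacent a d ∧
    G.Adjacent b c ∧ G.Adjacent b d ∧ G.Adjacent c d

/-- The neighbourhood `N(X)`: vertices outside `X` with a neighbour in `X`. -/
noncomputable def neighborFinset (X : Finset G.V) : Finset G.V := by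
  classical
  exact Finset.univ.filter fun y => y ∉ X ∧ ∃ x ∈ X, G.Adjacent x y

/-- Induced subgraph on a vertex set `S`. -/
def induce (S : Finset G.V) : Multigraph where
  V := {v // v ∈ S}
  fintypeV := inferInstance
  decEqV := inferInstance
  E := {e : G.E // (G.ends e).1 ∈ S ∧ (G.ends e).2 ∈ S}
  fintypeE := inferInstance
  decEqE := inferInstance
  ends := fun e => (⟨(G.ends e.1).1, e.2.1⟩, ⟨(G.ends e.1).2, e.2.2⟩)
  loopless := fun e h => G.loopless e.1 (congrArg Subtype.val h)

/-- The relation identifying the two ends of each edge in `F`. -/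
def contractRel (F : Set G.E) (x y : G.V) : Prop :=
  ∃ e ∈ F, G.ends e = (x, y) ∨ G.ends e = (y, x)

/-- Contraction of a set `F` of edges: identify endpoints of edges of `F`
(via the equivalence closure), delete the edges of `F` and all resulting loops. -/
noncomputable def contractEdges (F : Set G.E) : Multigraph := by
  classical
  exact
    { V := Quot (G.contractRel F)
      fintypeV := Fintype.ofSurjective (Quot.mk _) (fun q => Quot.inductionOn q fun a => ⟨a, rfl⟩)
      decEqV := Classical.decEq _
      E := {e : G.E // e ∉ F ∧
            Quot.mk (G.contractRel F) (G.ends e).1 ≠ Quot.mk (G.contractRel F) (G.ends e).2}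
      fintypeE := Subtype.fintype _
      decEqE := Classical.decEq _
      ends := fun e => (Quot.mk _ (G.ends e.1).1, Quot.mk _ (G.ends e.1).2)
      loopless := fun e => e.2.2 }

end Multigraph

/-- A subgraph of a multigraph. -/
structure Multigraph.Subgraph (G : Multigraph) where
  verts : Finset G.V
  edges : Finset G.E
  ends_mem : ∀ e ∈ edges, (G.ends e).1 ∈ verts ∧ (G.ends e).2 ∈ verts

namespace Multigraph

/-- A subgraph as a multigraph in its own right. -/
def Subgraph.toMultigraph {G : Multigraph} (H : G.Subgraph) : Multigraph where
  V := {v // v ∈ H.verts}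
  fintypeV := inferInstance
  decEqV := inferInstance
  E := {e // e ∈ H.edges}
  fintypeE := inferInstance
  decEqE := inferInstance
  ends := fun e => (⟨(G.ends e.1).1, (H.ends_mem e.1 e.2).1⟩, ⟨(G.ends e.1).2, (H.ends_mem e.1 e.2).2⟩)
  loopless := fun e h => G.loopless e.1 (congrArg Subtype.val h)

/-- `G` is `⟨ℤ₃⟩`-reduced: it has no `ℤ₃`-connected subgraph with at least two vertices. -/
def Z3Reduced (G : Multigraph) : Prop :=
  ∀ H : G.Subgraph, H.toMultigraph.Z3Connected → H.verts.card ≤ 1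

/-- The contraction `G/H` of a subgraph. -/
noncomputable def contractSubgraph (G : Multigraph) (H : G.Subgraph) : Multigraph :=
  G.contractEdges {e | e ∈ H.edges}

/-- The `⟨ℤ₃⟩`-reduction of `G`: contract (the edges of) all maximal `ℤ₃`-connected
subgraphs of `G`. -/
noncomputable def reduction (G : Multigraph) : Multigraph :=
  G.contractEdges {e | ∃ H : G.Subgraph, H.toMultigraph.Z3Connected ∧ e ∈ H.edges}

end Multigraph

/-- `r(n)`: the maximum number of edges of a `⟨ℤ₃⟩`-reduced graph on `n` vertices. -/
noncomputable def edgeMaxReduced (n : ℕ) : ℕ :=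
  sSup {m : ℕ | ∃ G : Multigraph, G.Z3Reduced ∧ Fintype.card G.V = n ∧ Fintype.card G.E = m}

/-- The complete graph `K_n`. -/
def completeK (n : ℕ) : Multigraph where
  V := Fin n
  fintypeV := inferInstance
  decEqV := inferInstance
  E := {p : Fin n × Fin n // p.1 < p.2}
  fintypeE := inferInstance
  decEqE := inferInstance
  ends := fun p => p.1
  loopless := fun p => Fin.ne_of_lt p.2

private theorem fin_succ_ne {n : ℕ} (hn : 2 ≤ n) (i : Fin n)
    (hv : (i : ℕ) = ((i : ℕ) + 1) % n) : False := by
  have hi := i.isLt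
  by_cases hlt : (i : ℕ) + 1 < n
  · rw [Nat.mod_eq_of_lt hlt] at hv; omega
  · have he : (i : ℕ) + 1 = n := by omega
    rw [he, Nat.mod_self] at hv; omega

/-- The cycle `C_n` (for `n ≥ 2`); `C_2` is a digon. -/
def cycleGraph (n : ℕ) (hn : 2 ≤ n) : Multigraph where
  V := Fin n
  fintypeV := inferInstance
  decEqV := inferInstance
  E := Fin n
  fintypeE := inferInstance
  decEqE := inferInstance
  ends := fun i => (i, ⟨((i : ℕ) + 1) % n, Nat.mod_lt _ (by omega)⟩)
  loopless := fun i h => fin_succ_ne hn i (congrArg Fin.val h)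

/-- The wheel `W_n` (for `n ≥ 2`): an `n`-cycle on `some 0, …, some (n-1)` together
with a center `none` joined to every vertex of the cycle. -/
def wheelGraph (n : ℕ) (hn : 2 ≤ n) : Multigraph where
  V := Option (Fin n)
  fintypeV := inferInstance
  decEqV := inferInstance
  E := Fin n ⊕ Fin n
  fintypeE := inferInstance
  decEqE := inferInstance
  ends := fun e => match e with
    | .inl i => (some i, some ⟨((i : ℕ) + 1) % n, Nat.mod_lt _ (by omega)⟩)
    | .inr i => (none, some i)
  loopless := by
    rintro (i | i) h
    · exact fin_succ_ne hn i (congrArg Fin.val (Option.some_injective _ h))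
    · have h' : (none : Option (Fin n)) = some i := h
      cases h'


set_option linter.unnecessarySimpa false

private lemma diff_eq_sum (G : Multigraph) (D : G.E → Bool) (v : G.V) :
    (G.outDeg D v : ZMod 3) - (G.inDeg D v : ZMod 3) =
      ∑ e : G.E, ((if G.tail D e = v then (1 : ZMod 3) else 0) -
        (if G.head D e = v then (1 : ZMod 3) else 0)) := by
  rw [Finset.sum_sub_distrib]
  unfold Multigraph.outDeg Multigraph.inDeg
  rw [Finset.card_filter, Finset.card_filter]
  push_cast
  rfl

private lemma sum_indicator (n k : ℕ) (hk : k ≤ n) :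
    ∑ i : Fin n, (if (i : ℕ) < k then (1 : ZMod 3) else 0) = (k : ZMod 3) := by
  rw [Fin.sum_univ_eq_sum_range (fun i => if i < k then (1 : ZMod 3) else 0)]
  rw [← Finset.sum_filter]
  have h : (Finset.range n).filter (fun i => i < k) = Finset.range k := by
    ext i; simp; omega
  rw [h, Finset.sum_const, Finset.card_range, nsmul_eq_mul, mul_one]

private def splitEdge (n : ℕ) : (completeK (n+1)).E ≃ (completeK n).E ⊕ Fin n where
  toFun e :=
    if h : ((e.1.2 : Fin (n+1)) : ℕ) < n then
      Sum.inl ⟨(⟨e.1.1, by have := e.2; rw [Fin.lt_def] at this; omega⟩, ⟨e.1.2, h⟩), by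
        have := e.2; rw [Fin.lt_def] at this; exact this⟩
    else
      Sum.inr ⟨e.1.1, by
        have := e.2; rw [Fin.lt_def] at this; have h2 := e.1.2.isLt; omega⟩
  invFun x :=
    match x with
    | Sum.inl f => ⟨(f.1.1.castSucc, f.1.2.castSucc), by
        have := f.2; rw [Fin.lt_def] at this ⊢; simpa using this⟩
    | Sum.inr i => ⟨(i.castSucc, Fin.last n), by
        rw [Fin.lt_def]; simpa using i.isLt⟩
  left_inv e := by
    rcases e with ⟨⟨a, b⟩, h⟩
    by_cases hb : (b : ℕ) < n
    · simp only [hb, dif_pos]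
      apply Subtype.ext
      simp [Fin.ext_iff]
    · simp only [hb, dif_neg, not_false_iff]
      apply Subtype.ext
      have hb2 := b.isLt
      rw [Fin.lt_def] at h
      simp [Fin.ext_iff]
      omega
  right_inv x := by
    rcases x with f | i
    · rcases f with ⟨⟨a, b⟩, h⟩
      have hb : ((b.castSucc : Fin (n+1)) : ℕ) < n := by simpa using b.isLt
      simp only [hb, dif_pos]
      congr 1
    · have hb : ¬ (((Fin.last n : Fin (n+1))) : ℕ) < n := by simp
      simp only [hb, dif_neg, not_false_iff]
      congr 1
private instance decCompleteKFin (n : ℕ) (a : (completeK n).V) (b : Fin n) : Decidable (a = b) :=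
  (completeK n).decEqV a b
private lemma step_lemma (n : ℕ) (hn : 2 ≤ n) (IH : (completeK n).Z3Connected) :
    (completeK (n+1)).Z3Connected := by
  intro b hb
  set β := b (Fin.last n) with hβ
  obtain ⟨k, hk2, hkval⟩ : ∃ k : ℕ, k ≤ 2 ∧ ((k : ZMod 3) * 2 = β + (n : ZMod 3)) := by
    refine ⟨((β + (n : ZMod 3)) * 2).val, ?_, ?_⟩
    · have := ZMod.val_lt ((β + (n : ZMod 3)) * 2); omega
    · rw [ZMod.natCast_val, ZMod.cast_id]
      have : (β + (n : ZMod 3)) * 2 * 2 = (β + (n : ZMod 3)) * 4 := by ring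
      rw [this]
      have h4 : (4 : ZMod 3) = 1 := by decide
      rw [h4, mul_one]
  have hkn : k ≤ n := le_trans hk2 hn
  have hind := sum_indicator n k hkn
  set b' : Fin n → ZMod 3 := fun u => b u.castSucc - (if (u : ℕ) < k then -1 else 1) with hb'def
  have hsum1 : ∑ u : Fin n, (if (u : ℕ) < k then (-1 : ZMod 3) else 1)
      = (n : ZMod 3) - 2 * k := by
    have : ∀ u : Fin n, (if (u : ℕ) < k then (-1 : ZMod 3) else 1)
        = 1 - 2 * (if (u : ℕ) < k then (1 : ZMod 3) else 0) := by
      intro u; split <;> ring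
    rw [Finset.sum_congr rfl (fun u _ => this u), Finset.sum_sub_distrib,
      ← Finset.mul_sum, hind]
    simp [mul_comm]
  have hb'sum : ∑ u : Fin n, b' u = 0 := by
    have hsplit : ∑ u : Fin n, b u.castSucc + b (Fin.last n) = 0 :=
      (Fin.sum_univ_castSucc b).symm.trans hb
    rw [← hβ] at hsplit
    rw [hb'def]
    simp only [Finset.sum_sub_distrib, hsum1]
    have h1 : ∑ u : Fin n, b u.castSucc = -β := by linear_combination hsplit
    rw [h1]
    linear_combination hkval
  obtain ⟨D', hD'⟩ := IH b' hb'sum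
  set φ := splitEdge n with hφ
  set D : (completeK (n+1)).E → Bool := fun e =>
    match φ e with
    | Sum.inl f => D' f
    | Sum.inr i => decide (k ≤ (i : ℕ)) with hDdef
  have hD1 : ∀ f : (completeK n).E, D (φ.symm (Sum.inl f)) = D' f := by
    intro f
    show (match φ (φ.symm (Sum.inl f)) with
      | Sum.inl f => D' f
      | Sum.inr i => decide (k ≤ (i : ℕ))) = D' f
    rw [Equiv.apply_symm_apply]
  have hD2 : ∀ i : Fin n, D (φ.symm (Sum.inr i)) = decide (k ≤ (i : ℕ)) := by
    intro i
    show (match φ (φ.symm (Sum.inr i)) with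
      | Sum.inl f => D' f
      | Sum.inr i => decide (k ≤ (i : ℕ))) = _
    rw [Equiv.apply_symm_apply]
  have hends1 : ∀ f : (completeK n).E,
      (completeK (n+1)).ends (φ.symm (Sum.inl f)) = (f.1.1.castSucc, f.1.2.castSucc) := by
    intro f; rfl
  have hends2 : ∀ i : Fin n,
      (completeK (n+1)).ends (φ.symm (Sum.inr i)) = (i.castSucc, Fin.last n) := by
    intro i; rfl
  have htail1 : ∀ f : (completeK n).E,
      (completeK (n+1)).tail D (φ.symm (Sum.inl f)) = ((completeK n).tail D' f).castSucc := by
    intro f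
    unfold Multigraph.tail
    rw [hD1, hends1]
    exact (apply_ite Fin.castSucc _ _ _).symm
  have hhead1 : ∀ f : (completeK n).E,
      (completeK (n+1)).head D (φ.symm (Sum.inl f)) = ((completeK n).head D' f).castSucc := by
    intro f
    unfold Multigraph.head
    rw [hD1, hends1]
    exact (apply_ite Fin.castSucc _ _ _).symm
  have htail2 : ∀ i : Fin n,
      (completeK (n+1)).tail D (φ.symm (Sum.inr i))
        = if k ≤ (i : ℕ) then i.castSucc else Fin.last n := by
    intro i
    unfold Multigraph.tail
    rw [hD2, hends2]
    by_cases h : k ≤ (i : ℕ) <;> simp [h] <;> rfl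
  have hhead2 : ∀ i : Fin n,
      (completeK (n+1)).head D (φ.symm (Sum.inr i))
        = if k ≤ (i : ℕ) then Fin.last n else i.castSucc := by
    intro i
    unfold Multigraph.head
    rw [hD2, hends2]
    by_cases h : k ≤ (i : ℕ) <;> simp [h] <;> rfl
  refine ⟨D, ?_⟩
  intro v
  rw [diff_eq_sum]
  rw [← Equiv.sum_comp φ.symm (fun e => ((if (completeK (n+1)).tail D e = v then (1 : ZMod 3) else 0) -
        (if (completeK (n+1)).head D e = v then (1 : ZMod 3) else 0)))]
  rw [Fintype.sum_sum_type]
  induction v using Fin.lastCases with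
  | last =>
    have hz : ∀ f : (completeK n).E,
        ((if (completeK (n+1)).tail D (φ.symm (Sum.inl f)) = Fin.last n then (1 : ZMod 3) else 0) -
         (if (completeK (n+1)).head D (φ.symm (Sum.inl f)) = Fin.last n then (1 : ZMod 3) else 0)) = 0 := by
      intro f
      rw [htail1, hhead1]
      erw [if_neg (Fin.castSucc_lt_last _).ne, if_neg (Fin.castSucc_lt_last _).ne]
      ring
    rw [Finset.sum_congr rfl (fun f _ => hz f), Finset.sum_const, smul_zero, zero_add]
    have hterm : ∀ i : Fin n,
        ((if (completeK (n+1)).tail D (φ.symm (Sum.inr i)) = Fin.last n then (1 : ZMod 3) else 0) -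
         (if (completeK (n+1)).head D (φ.symm (Sum.inr i)) = Fin.last n then (1 : ZMod 3) else 0))
        = 2 * (if (i : ℕ) < k then (1 : ZMod 3) else 0) - 1 := by
      intro i
      rw [htail2, hhead2]
      by_cases h : k ≤ (i : ℕ)
      · erw [if_pos h, if_pos h, if_neg (Fin.castSucc_lt_last _).ne, if_pos rfl,
          if_neg (by omega : ¬ (i : ℕ) < k)]
        ring
      · erw [if_neg h, if_neg h, if_pos rfl, if_neg (Fin.castSucc_lt_last _).ne,
          if_pos (by omega : (i : ℕ) < k)]
        ring
    rw [Finset.sum_congr rfl (fun i _ => hterm i), Finset.sum_sub_distrib, ← Finset.mul_sum, hind]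
    simp only [Finset.sum_const, Finset.card_univ, Fintype.card_fin, nsmul_eq_mul, mul_one]
    rw [← hβ]
    linear_combination hkval
  | cast u =>
    have hterm1 : ∀ f : (completeK n).E,
        ((if (completeK (n+1)).tail D (φ.symm (Sum.inl f)) = u.castSucc then (1 : ZMod 3) else 0) -
         (if (completeK (n+1)).head D (φ.symm (Sum.inl f)) = u.castSucc then (1 : ZMod 3) else 0))
        = ((if (completeK n).tail D' f = u then (1 : ZMod 3) else 0) -
           (if (completeK n).head D' f = u then (1 : ZMod 3) else 0)) := by
      intro f
      rw [htail1, hhead1]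
      congr 1 <;> congr 1 <;> exact propext (Fin.castSucc_injective n).eq_iff
    have hterm2 : ∀ i : Fin n,
        ((if (completeK (n+1)).tail D (φ.symm (Sum.inr i)) = u.castSucc then (1 : ZMod 3) else 0) -
         (if (completeK (n+1)).head D (φ.symm (Sum.inr i)) = u.castSucc then (1 : ZMod 3) else 0))
        = (if i = u then (if k ≤ (i : ℕ) then (1 : ZMod 3) else -1) else 0) := by
      intro i
      rw [htail2, hhead2]
      by_cases h : k ≤ (i : ℕ)
      · erw [if_pos h, if_pos h, if_neg (Fin.castSucc_lt_last _).ne']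
        by_cases hiu : i = u
        · erw [if_pos hiu, if_pos (by rw [hiu]), if_pos h]; ring
        · erw [if_neg hiu, if_neg (fun hh => hiu (Fin.castSucc_inj.mp hh))]; ring
      · erw [if_neg h, if_neg h, if_neg (Fin.castSucc_lt_last _).ne']
        by_cases hiu : i = u
        · erw [if_pos hiu, if_pos (by rw [hiu]), if_neg h]; ring
        · erw [if_neg hiu, if_neg (fun hh => hiu (Fin.castSucc_inj.mp hh))]; ring
    rw [Finset.sum_congr rfl (fun f _ => hterm1 f), Finset.sum_congr rfl (fun i _ => hterm2 i)]
    erw [← diff_eq_sum, hD' u]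
    rw [Finset.sum_ite_eq' Finset.univ u (fun i => if k ≤ (i : ℕ) then (1 : ZMod 3) else -1)]
    rw [if_pos (Finset.mem_univ u)]
    simp only [hb'def]
    by_cases h : k ≤ (u : ℕ)
    · rw [if_pos h, if_neg (by omega : ¬ (u : ℕ) < k)]; ring
    · rw [if_neg h, if_pos (by omega : (u : ℕ) < k)]; ring

private lemma k1_z3 : (completeK 1).Z3Connected := by
  unfold Multigraph.Z3Connected completeK; decide

set_option maxHeartbeats 4000000 in
set_option maxRecDepth 20000 in
private lemma k5_z3 : (completeK 5).Z3Connected := by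
  unfold Multigraph.Z3Connected completeK; decide

private lemma not_k2 : ¬ (completeK 2).Z3Connected := by
  unfold Multigraph.Z3Connected completeK; decide

private lemma not_k3 : ¬ (completeK 3).Z3Connected := by
  unfold Multigraph.Z3Connected completeK; decide

set_option maxRecDepth 4000 in
private lemma not_k4 : ¬ (completeK 4).Z3Connected := by
  unfold Multigraph.Z3Connected completeK; decide

private lemma k_ge5 (m : ℕ) : (completeK (5 + m)).Z3Connected := by
  induction m with
  | zero => exact k5_z3
  | succ t ih => exact step_lemma (5 + t) (by omega) ih

/-- The complete graph `K_n` is `ℤ₃`-connected iff `n = 1` or `n ≥ 5`. -/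
theorem completeK_z3Connected_iff (n : ℕ) (hn : 1 ≤ n) :
    (completeK n).Z3Connected ↔ (n = 1 ∨ 5 ≤ n) := by
  constructor
  · intro h
    by_contra hc
    push_neg at hc
    obtain ⟨h1, h5⟩ := hc
    interval_cases n
    · exact h1 rfl
    · exact not_k2 h
    · exact not_k3 h
    · exact not_k4 h
  · rintro (rfl | h5)
    · exact k1_z3
    · obtain ⟨m, rfl⟩ : ∃ m, n = 5 + m := ⟨n - 5, by omega⟩
      exact k_ge5 m
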